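/- Let B = {x_1,...,x_m} ⊂ R^d be points lying on a sphere, and let H_1,...,H_n ⊆ {1,...,m} with |H_1| ≤ |H_2| ≤ ... ≤ |H_n|. Say (B, H) is realizable on a k-dimensional sphere S^k if there exist distinct points x_1,...,x_m on S^k such that for every l ≤ n and every i ∉ H_l, the point x_i does not lie in the affine hull of {x_j : j ∈ H_l}. If (B, H) is not realizable on S^k, then Σ_{i=1}^{n} |H_i| ≥ C(k+3, 2) - 3. -/

import Mathlib

/-- `(B, H)` (with `B` of size `m` and conditions `H_1,…,H_n`) is realizable on a
`k`-dimensional sphere: there are distinct points `x_1,…,x_m` on a `k`-dimensional sphere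
(the unit sphere of `ℝ^{k+1}`) such that for every `l` and every `i ∉ H_l`, the point `x_i`
does not lie in the affine hull of `{x_j : j ∈ H_l}`. -/
def RealizableOnSphere (m n k : ℕ) (H : Fin n → Finset (Fin m)) : Prop :=
  ∃ x : Fin m → EuclideanSpace ℝ (Fin (k + 1)),
    Function.Injective x ∧
    (∀ i, x i ∈ Metric.sphere (0 : EuclideanSpace ℝ (Fin (k + 1))) 1) ∧
    ∀ (l : Fin n) (i : Fin m), i ∉ H l →
      x i ∉ affineSpan ℝ (x '' ↑(H l))

open Finset Polynomial

section Combo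
variable {V : Type*} [AddCommGroup V] [Module ℝ V] {ι : Type*}

/-- Membership in the affine span of the image of a finset, via weights summing to `1`. -/
lemma mem_affineSpan_image_iff (s : Finset ι) (f : ι → V) (x : V) :
    x ∈ affineSpan ℝ (f '' ↑s) ↔
      ∃ w : ι → ℝ, ∑ j ∈ s, w j = 1 ∧ ∑ j ∈ s, w j • f j = x := by
  classical
  constructor
  · intro hx
    rw [Set.image_eq_range] at hx
    obtain ⟨w, hw1, hwx⟩ := eq_affineCombination_of_mem_affineSpan_of_fintype hx
    rw [Finset.univ.affineCombination_eq_linear_combination _ _ hw1] at hwx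
    refine ⟨fun j => if h : j ∈ s then w ⟨j, h⟩ else 0, ?_, ?_⟩
    · rw [← hw1, Finset.univ_eq_attach, ← Finset.sum_attach s
        (fun j => if h : j ∈ s then w ⟨j, h⟩ else 0)]
      exact Finset.sum_congr rfl fun j _ => by simp [j.2]
    · rw [hwx, Finset.univ_eq_attach, ← Finset.sum_attach s
        (fun j => (if h : j ∈ s then w ⟨j, h⟩ else 0) • f j)]
      exact (Finset.sum_congr rfl fun j _ => by simp [j.2]).symm
  · rintro ⟨w, hw1, rfl⟩
    have hw1' : ∑ j : {y // y ∈ s}, w j.1 = 1 := by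
      rw [Finset.univ_eq_attach, Finset.sum_attach s (fun j => w j)]; exact hw1
    have := affineCombination_mem_affineSpan (k := ℝ)
      (s := (Finset.univ : Finset {y // y ∈ s})) (w := fun j => w j.1) hw1'
      (fun j : {y // y ∈ s} => f j.1)
    rw [Finset.univ.affineCombination_eq_linear_combination _ _ hw1'] at this
    rw [show (Set.range fun j : {y // y ∈ s} => f j.1) = f '' ↑s from
      (Set.image_eq_range f ↑s).symm] at this
    rwa [Finset.univ_eq_attach, Finset.sum_attach s (fun j => w j • f j)] at this

/-- Exchange lemma: if each point avoids the affine span of any (≤ K)-subset of earlier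
points, then each point avoids the affine span of any (≤ K)-subset not containing it. -/
lemma claimE {m K : ℕ} (x : Fin m → V)
    (hx : ∀ (r : Fin m) (s : Finset (Fin m)), (∀ j ∈ s, j < r) → s.card ≤ K →
      x r ∉ affineSpan ℝ (x '' ↑s)) :
    ∀ (s : Finset (Fin m)) (i : Fin m), i ∉ s → s.card ≤ K →
      x i ∉ affineSpan ℝ (x '' ↑s) := by
  classical
  intro s
  induction s using Finset.strongInduction with
  | _ s ih =>
  intro i hi hcard hmem
  rcases s.eq_empty_or_nonempty with rfl | hne
  · rw [Finset.coe_empty, Set.image_empty, AffineSubspace.span_empty] at hmem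
    exact AffineSubspace.notMem_bot ℝ V _ hmem
  set r := s.max' hne with hrdef
  have hr : r ∈ s := s.max'_mem hne
  by_cases hir : r < i
  · exact hx i s (fun j hj => lt_of_le_of_lt (s.le_max' j hj) hir) hcard hmem
  · have hirlt : i < r :=
      lt_of_le_of_ne (not_lt.1 hir) (fun h => hi (h ▸ hr))
    obtain ⟨w, hw1, hws⟩ := (mem_affineSpan_image_iff s x _).1 hmem
    by_cases hwr : w r = 0
    · refine ih (s.erase r) (Finset.erase_ssubset hr) i
        (fun h => hi (Finset.mem_of_mem_erase h))
        (le_trans (Finset.card_le_card (Finset.erase_subset r s)) hcard) ?_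
      refine (mem_affineSpan_image_iff _ x _).2 ⟨w, ?_, ?_⟩
      · rw [Finset.sum_erase _ hwr]; exact hw1
      · rw [Finset.sum_erase _ (by rw [hwr, zero_smul])]; exact hws
    · have hixr : i ∉ s.erase r := fun h => hi (Finset.mem_of_mem_erase h)
      have hsum_erase : w r + ∑ j ∈ s.erase r, w j = 1 := by
        rw [← hw1]; exact Finset.add_sum_erase s w hr
      have hvec_erase : w r • x r + ∑ j ∈ s.erase r, w j • x j = x i := by
        rw [← hws]; exact Finset.add_sum_erase s (fun j => w j • x j) hr
      set W : Fin m → ℝ := fun j => if j = i then (w r)⁻¹ else -(w j) * (w r)⁻¹ with hWdef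
      have hWi : W i = (w r)⁻¹ := by simp [hWdef]
      have hWj : ∀ j ∈ s.erase r, W j = -(w j) * (w r)⁻¹ := by
        intro j hj
        have : j ≠ i := fun h => hixr (h ▸ hj)
        simp [hWdef, this]
      refine hx r (insert i (s.erase r)) ?_ ?_ ?_
      · intro j hj
        rcases Finset.mem_insert.1 hj with rfl | hj
        · exact hirlt
        · exact lt_of_le_of_ne (s.le_max' j (Finset.mem_of_mem_erase hj))
            (Finset.ne_of_mem_erase hj)
      · calc (insert i (s.erase r)).card ≤ (s.erase r).card + 1 :=
              Finset.card_insert_le _ _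
          _ = s.card := by
              rw [Finset.card_erase_of_mem hr]
              have : 1 ≤ s.card := Finset.card_pos.2 hne
              omega
          _ ≤ K := hcard
      · refine (mem_affineSpan_image_iff _ x _).2 ⟨W, ?_, ?_⟩
        · rw [Finset.sum_insert hixr, hWi,
            Finset.sum_congr rfl hWj, ← Finset.sum_mul]
          have h1 : ∑ j ∈ s.erase r, -w j = -(1 - w r) := by
            rw [Finset.sum_neg_distrib]
            have : ∑ j ∈ s.erase r, w j = 1 - w r := by linarith
            rw [this]
          rw [h1]
          field_simp
          ring
        · rw [Finset.sum_insert hixr, hWi,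
            Finset.sum_congr rfl (fun j hj => by rw [hWj j hj])]
          have h2 : ∑ j ∈ s.erase r, (-(w j) * (w r)⁻¹) • x j
              = (-(w r)⁻¹ : ℝ) • ∑ j ∈ s.erase r, w j • x j := by
            rw [Finset.smul_sum]
            refine Finset.sum_congr rfl fun j hj => ?_
            rw [smul_smul]
            ring_nf
          rw [h2, ← hvec_erase, smul_add, smul_smul, inv_mul_cancel₀ hwr, one_smul,
            neg_smul]
          abel

end Combo

noncomputable section Curve

/-- `Qf k t = t² + t⁴ + ⋯ + t^{2k}`. -/
def Qf (k : ℕ) (t : ℝ) : ℝ := ∑ j ∈ Finset.range k, t ^ (2 * (j + 1))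

lemma Qf_nonneg (k : ℕ) (t : ℝ) : 0 ≤ Qf k t :=
  Finset.sum_nonneg fun j _ => (even_two_mul (j + 1)).pow_nonneg t

lemma Qf_denom_pos (k : ℕ) (t : ℝ) : 0 < Qf k t + 1 := by
  have := Qf_nonneg k t; linarith

lemma Qf_denom_ne (k : ℕ) (t : ℝ) : Qf k t + 1 ≠ 0 := ne_of_gt (Qf_denom_pos k t)

/-- The inverse stereographic image of the moment curve; a curve on the unit sphere
of `ℝ^{k+1}` such that any proper affine subspace meets it in finitely many points. -/
def curve (k : ℕ) (t : ℝ) : EuclideanSpace ℝ (Fin (k + 1)) := WithLp.toLp 2 fun j =>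
  if (j : ℕ) < k then (2 * t ^ ((j : ℕ) + 1)) / (Qf k t + 1)
  else (Qf k t - 1) / (Qf k t + 1)

lemma curve_castSucc (k : ℕ) (t : ℝ) (j : Fin k) :
    curve k t j.castSucc = (2 * t ^ ((j : ℕ) + 1)) / (Qf k t + 1) := by
  simp [curve, j.isLt]

lemma curve_last (k : ℕ) (t : ℝ) :
    curve k t (Fin.last k) = (Qf k t - 1) / (Qf k t + 1) := by
  simp [curve]

lemma curve_sumsq (k : ℕ) (t : ℝ) :
    ∑ j : Fin (k + 1), curve k t j ^ 2 = 1 := by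
  rw [Fin.sum_univ_castSucc]
  have h1 : ∀ j : Fin k, curve k t j.castSucc ^ 2
      = 4 * t ^ (2 * ((j : ℕ) + 1)) / (Qf k t + 1) ^ 2 := by
    intro j
    rw [curve_castSucc, div_pow, mul_pow, ← pow_mul]
    ring_nf
  rw [Finset.sum_congr rfl fun j _ => h1 j, curve_last]
  have h2 : ∑ j : Fin k, 4 * t ^ (2 * ((j : ℕ) + 1)) / (Qf k t + 1) ^ 2
      = 4 * Qf k t / (Qf k t + 1) ^ 2 := by
    rw [← Finset.sum_div, ← Finset.mul_sum, Qf, Fin.sum_univ_eq_sum_range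
      (fun j => t ^ (2 * (j + 1)))]
  rw [h2, div_pow]
  have hD := Qf_denom_ne k t
  field_simp
  ring

lemma curve_mem_sphere (k : ℕ) (t : ℝ) :
    curve k t ∈ Metric.sphere (0 : EuclideanSpace ℝ (Fin (k + 1))) 1 := by
  rw [mem_sphere_zero_iff_norm, EuclideanSpace.norm_eq]
  have habs : ∀ j : Fin (k + 1), ‖curve k t j‖ ^ 2 = curve k t j ^ 2 := fun j => by
    rw [Real.norm_eq_abs, sq_abs]
  rw [Finset.sum_congr rfl fun j _ => habs j, curve_sumsq, Real.sqrt_one]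

lemma curve_injective (k : ℕ) (hk : 1 ≤ k) : Function.Injective (curve k) := by
  intro t t' h
  have hl := congrFun (congrArg WithLp.ofLp h) (Fin.last k)
  rw [curve_last, curve_last] at hl
  have hD := Qf_denom_ne k t
  have hD' := Qf_denom_ne k t'
  have hq : Qf k t = Qf k t' := by
    field_simp at hl
    ring_nf at hl
    linarith
  have h0 := congrFun (congrArg WithLp.ofLp h) (⟨0, by omega⟩ : Fin (k + 1))
  simp only [curve] at h0
  rw [if_pos (by show 0 < k; omega), if_pos (by show 0 < k; omega)] at h0
  rw [hq] at h0
  field_simp at h0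
  simp only [zero_add, pow_one] at h0
  linarith

/-- any affine span of at most `k+1` points meets the curve in finitely many parameters. -/
lemma finite_bad (k : ℕ) (hk : 1 ≤ k) (S : Finset (EuclideanSpace ℝ (Fin (k + 1))))
    (hS : S.card ≤ k + 1) :
    {t : ℝ | curve k t ∈ affineSpan ℝ (S : Set (EuclideanSpace ℝ (Fin (k + 1))))}.Finite := by
  classical
  rcases S.eq_empty_or_nonempty with rfl | ⟨p₀, hp₀⟩
  · convert Set.finite_empty
    ext t
    simp [AffineSubspace.span_empty, AffineSubspace.notMem_bot]
  have hV : Module.finrank ℝ (vectorSpan ℝ (S : Set (EuclideanSpace ℝ (Fin (k + 1)))))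
      ≤ k := by
    have hc : S.card = (S.card - 1) + 1 := by
      have : 1 ≤ S.card := Finset.card_pos.2 ⟨p₀, hp₀⟩
      omega
    have := finrank_vectorSpan_image_finset_le ℝ (id : EuclideanSpace ℝ (Fin (k+1)) → _)
      S hc
    rw [Finset.image_id] at this
    exact le_trans this (by omega)
  have hVne : (vectorSpan ℝ (S : Set (EuclideanSpace ℝ (Fin (k + 1))))) ≠ ⊤ := by
    intro h
    rw [h, finrank_top, finrank_euclideanSpace_fin] at hV
    omega
  have hbot : (vectorSpan ℝ (S : Set (EuclideanSpace ℝ (Fin (k + 1)))))ᗮ ≠ ⊥ := by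
    rw [Submodule.ne_bot_iff]
    by_contra hcon
    push_neg at hcon
    have : (vectorSpan ℝ (S : Set (EuclideanSpace ℝ (Fin (k + 1)))))ᗮ = ⊥ := by
      rw [Submodule.eq_bot_iff]; intro x hx; by_contra hx0; exact hx0 (by
        have := hcon x hx; tauto)
    exact hVne (Submodule.orthogonal_eq_bot_iff.1 this)
  obtain ⟨u, humem, hu0⟩ := Submodule.ne_bot_iff _ |>.1 hbot
  set a : ℝ := inner ℝ u p₀ with ha
  have hbad : ∀ t : ℝ, curve k t ∈ affineSpan ℝ (S : Set (EuclideanSpace ℝ (Fin (k + 1)))) →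
      (inner ℝ u (curve k t) : ℝ) = a := by
    intro t ht
    have hp₀' : p₀ ∈ affineSpan ℝ (S : Set (EuclideanSpace ℝ (Fin (k + 1)))) :=
      subset_affineSpan ℝ _ (by exact_mod_cast hp₀)
    have hdir : curve k t -ᵥ p₀ ∈ vectorSpan ℝ (S : Set (EuclideanSpace ℝ (Fin (k + 1)))) := by
      rw [← direction_affineSpan]
      exact AffineSubspace.vsub_mem_direction ht hp₀'
    have := (Submodule.mem_orthogonal _ u).1 humem _ hdir
    have h2 : (inner ℝ u (curve k t - p₀) : ℝ) = 0 := by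
      rwa [real_inner_comm] at this
    rw [inner_sub_right] at h2
    linarith [h2]
  set A : ℝ := u (Fin.last k) with hA
  set P : Polynomial ℝ :=
    (∑ j : Fin k, C (2 * u j.castSucc) * X ^ ((j : ℕ) + 1))
      + C (A - a) * (∑ j ∈ Finset.range k, (X : Polynomial ℝ) ^ (2 * (j + 1)))
      + C (-(A + a)) with hP
  have heval : ∀ t : ℝ, P.eval t
      = ((inner ℝ u (curve k t) : ℝ) - a) * (Qf k t + 1) := by
    intro t
    have hD := Qf_denom_ne k t
    have hinner : (inner ℝ u (curve k t) : ℝ)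
        = (∑ j : Fin k, u j.castSucc * (2 * t ^ ((j : ℕ) + 1))) / (Qf k t + 1)
          + u (Fin.last k) * ((Qf k t - 1) / (Qf k t + 1)) := by
      rw [PiLp.inner_apply]
      simp only [RCLike.inner_apply, conj_trivial]
      rw [Fin.sum_univ_castSucc, curve_last]
      congr 1
      rw [Finset.sum_div]
      exact Finset.sum_congr rfl fun j _ => by rw [curve_castSucc]; ring
      ring
    have hev : P.eval t = (∑ j : Fin k, u j.castSucc * (2 * t ^ ((j : ℕ) + 1)))
        + (A - a) * Qf k t - (A + a) := by
      simp only [hP, eval_add, eval_mul, eval_C, eval_pow, eval_X, eval_finset_sum]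
      have h1 : ∑ j : Fin k, (2 * u j.castSucc) * t ^ ((j : ℕ) + 1)
          = ∑ j : Fin k, u j.castSucc * (2 * t ^ ((j : ℕ) + 1)) :=
        Finset.sum_congr rfl fun j _ => by ring
      have h2 : ∑ j ∈ Finset.range k, t ^ (2 * (j + 1)) = Qf k t := rfl
      rw [h1, h2]
      ring
    rw [hev, hinner]
    generalize ∑ j : Fin k, u j.castSucc * (2 * t ^ ((j : ℕ) + 1)) = σ
    field_simp
    rw [hA]
    ring
  have hcoeff : ∀ n : ℕ, P.coeff n
      = (∑ j : Fin k, if n = (j : ℕ) + 1 then 2 * u j.castSucc else 0)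
        + (A - a) * (∑ j ∈ Finset.range k, if n = 2 * (j + 1) then (1 : ℝ) else 0)
        + (if n = 0 then -(A + a) else 0) := by
    intro n
    simp only [hP, coeff_add, finset_sum_coeff, coeff_C_mul, coeff_X_pow, coeff_C,
      mul_ite, mul_one, mul_zero]
  have hP0 : P ≠ 0 := by
    intro hzero
    have hc : ∀ n, P.coeff n = 0 := by intro n; rw [hzero]; simp
    have h0 := hc 0
    rw [hcoeff 0] at h0
    have e1 : (∑ j : Fin k, if 0 = (j : ℕ) + 1 then 2 * u j.castSucc else 0) = 0 :=
      Finset.sum_eq_zero fun j _ => by rw [if_neg (by omega)]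
    have e2 : (∑ j ∈ Finset.range k, if 0 = 2 * (j + 1) then (1 : ℝ) else 0) = 0 :=
      Finset.sum_eq_zero fun j _ => by rw [if_neg (by omega)]
    rw [e1, e2, if_pos rfl] at h0
    have h2k := hc (2 * k)
    rw [hcoeff (2 * k)] at h2k
    have e3 : (∑ j : Fin k, if 2 * k = (j : ℕ) + 1 then 2 * u j.castSucc else 0) = 0 :=
      Finset.sum_eq_zero fun j _ => by
        have := j.isLt
        rw [if_neg (by omega)]
    have e4 : (∑ j ∈ Finset.range k, if 2 * k = 2 * (j + 1) then (1 : ℝ) else 0) = 1 := by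
      rw [Finset.sum_eq_single_of_mem (k - 1) (Finset.mem_range.2 (by omega))]
      · rw [if_pos (by omega)]
      · intro j hj hne
        have := Finset.mem_range.1 hj
        rw [if_neg (by omega)]
    rw [e3, e4, if_neg (by omega)] at h2k
    have hAa : A = 0 ∧ a = 0 := by constructor <;> nlinarith [h0, h2k]
    have hcs : ∀ i : Fin k, u i.castSucc = 0 := by
      intro i
      have hi := hc ((i : ℕ) + 1)
      rw [hcoeff ((i : ℕ) + 1)] at hi
      have e5 : (∑ j : Fin k, if (i : ℕ) + 1 = (j : ℕ) + 1 then 2 * u j.castSucc else 0)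
          = 2 * u i.castSucc := by
        rw [Finset.sum_eq_single_of_mem i (Finset.mem_univ i)]
        · rw [if_pos rfl]
        · intro j _ hne
          rw [if_neg (by
            intro hcontra
            exact hne (by
              apply Fin.ext
              omega))]
      rw [e5, hAa.1, hAa.2, if_neg (by omega)] at hi
      simp at hi
      linarith
    apply hu0
    ext j
    refine Fin.lastCases ?_ ?_ j
    · exact hAa.1
    · exact hcs
  refine Set.Finite.subset (P.finite_setOf_isRoot hP0) ?_
  intro t ht
  have h1 := hbad t ht
  have : P.eval t = 0 := by rw [heval t, h1]; ring
  exact this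

/-- Existence of parameters in "general position": each point of the resulting
configuration avoids the affine span of any at most `k+1` earlier points. -/
lemma exists_gp (k : ℕ) (hk : 1 ≤ k) (m : ℕ) :
    ∃ t : Fin m → ℝ, Function.Injective t ∧
      ∀ (r : Fin m) (s : Finset (Fin m)), (∀ j ∈ s, j < r) → s.card ≤ k + 1 →
        curve k (t r) ∉ affineSpan ℝ ((fun i => curve k (t i)) '' ↑s) := by
  classical
  induction m with
  | zero => exact ⟨Fin.elim0, fun i => i.elim0, fun r => r.elim0⟩
  | succ m ih =>
    obtain ⟨t, tinj, tprop⟩ := ih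
    set Bad : Set ℝ :=
      (⋃ s ∈ {s : Finset (Fin m) | s.card ≤ k + 1},
        {τ : ℝ | curve k τ ∈ affineSpan ℝ ((fun i => curve k (t i)) '' ↑s)}) ∪
      Set.range t with hBad
    have hfin : Bad.Finite := by
      apply Set.Finite.union
      · apply Set.Finite.biUnion (Set.toFinite _)
        intro s hs
        have him : ((s.image (fun i => curve k (t i)) : Finset _) : Set _) =
            (fun i => curve k (t i)) '' ↑s := Finset.coe_image
        have := finite_bad k hk (s.image (fun i => curve k (t i)))
          (le_trans Finset.card_image_le hs)
        rwa [him] at this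
      · exact Set.finite_range t
    obtain ⟨τ, hτ⟩ := (Set.Finite.infinite_compl hfin).nonempty
    have hτBad : τ ∉ Bad := hτ
    set t' : Fin (m + 1) → ℝ := Fin.snoc t τ with ht'
    have ht'cs : ∀ i : Fin m, t' i.castSucc = t i := fun i => by
      rw [ht']; exact Fin.snoc_castSucc _ _ _
    have ht'last : t' (Fin.last m) = τ := by
      rw [ht']; exact Fin.snoc_last _ _
    refine ⟨t', ?_, ?_⟩
    · intro i j hij
      rcases Fin.eq_castSucc_or_eq_last i with ⟨i', rfl⟩ | rfl <;>
        rcases Fin.eq_castSucc_or_eq_last j with ⟨j', rfl⟩ | rfl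
      · rw [ht'cs, ht'cs] at hij
        exact congrArg Fin.castSucc (tinj hij)
      · rw [ht'cs, ht'last] at hij
        exact absurd (Set.mem_range.2 ⟨i', hij⟩) (fun h => hτBad (Or.inr h))
      · rw [ht'last, ht'cs] at hij
        exact absurd (Set.mem_range.2 ⟨j', hij.symm⟩) (fun h => hτBad (Or.inr h))
      · rfl
    · intro r s hlt hcard
      have hlast : ∀ j ∈ s, j ≠ Fin.last m := fun j hj =>
        Fin.ne_last_of_lt (hlt j hj)
      set s₀ : Finset (Fin m) := Finset.filter (fun j : Fin m => j.castSucc ∈ s) Finset.univ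
        with hs₀def
      have himg : s = s₀.image Fin.castSucc := by
        ext j
        simp only [hs₀def, Finset.mem_image, Finset.mem_filter, Finset.mem_univ, true_and]
        constructor
        · intro hj
          obtain ⟨j', rfl⟩ := Fin.eq_castSucc_of_ne_last (hlast j hj)
          exact ⟨j', hj, rfl⟩
        · rintro ⟨j', hj', rfl⟩
          exact hj'
      have hcard₀ : s₀.card = s.card := by
        rw [himg, Finset.card_image_of_injective _ (Fin.castSucc_injective m)]
      have himgpts : (fun i => curve k (t' i)) '' (s : Set (Fin (m + 1)))
          = (fun i => curve k (t i)) '' (s₀ : Set (Fin m)) := by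
        rw [himg, Finset.coe_image, Set.image_image]
        exact Set.image_congr fun j _ => by rw [ht'cs]
      rcases Fin.eq_castSucc_or_eq_last r with ⟨r₀, rfl⟩ | rfl
      · rw [ht'cs, himgpts]
        refine tprop r₀ s₀ ?_ (hcard₀ ▸ hcard)
        intro j hj
        have hmem : j.castSucc ∈ s := (Finset.mem_filter.1 hj).2
        exact Fin.castSucc_lt_castSucc_iff.1 (hlt _ hmem)
      · rw [ht'last, himgpts]
        intro hmem
        refine hτBad (Or.inl ?_)
        exact Set.mem_biUnion (show s₀ ∈ {s : Finset (Fin m) | s.card ≤ k + 1} from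
          by simp only [Set.mem_setOf_eq]; omega) hmem

end Curve

lemma all_small_realizable (m n k : ℕ) (hk : 1 ≤ k) (H : Fin n → Finset (Fin m))
    (hsmall : ∀ l, (H l).card ≤ k + 1) : RealizableOnSphere m n k H := by
  obtain ⟨t, tinj, tprop⟩ := exists_gp k hk m
  refine ⟨fun i => curve k (t i), (curve_injective k hk).comp tinj,
    fun i => curve_mem_sphere k (t i), ?_⟩
  intro l i hi
  exact claimE (fun i => curve k (t i)) tprop (H l) i hi (hsmall l)

lemma euclid_sum_apply {ι : Type*} {d : ℕ} (s : Finset ι) (f : ι → EuclideanSpace ℝ (Fin d))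
    (p : Fin d) : (∑ j ∈ s, f j) p = ∑ j ∈ s, f j p := by
  classical
  induction s using Finset.induction with
  | empty => simp
  | insert _ _ h ih =>
    rw [Finset.sum_insert h, Finset.sum_insert h, PiLp.add_apply, ih]

/-- Key geometric step: any realization of `H_1, …, H_n` on `S^k` can be lifted to a
realization of `H_1, …, H_{n+1}` on `S^{k+1}`: points of `H_{n+1}` are placed on the
equator, and all other points are lifted off the equatorial hyperplane. -/
lemma lift_step (m n k : ℕ) (H : Fin (n + 1) → Finset (Fin m))
    (hreal : RealizableOnSphere m n k (fun l => H l.castSucc)) :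
    RealizableOnSphere m (n + 1) (k + 1) H := by
  classical
  obtain ⟨y, hyinj, hysph, hycon⟩ := hreal
  set L : Finset (Fin m) := H (Fin.last n) with hL
  set sq2 : ℝ := (Real.sqrt 2)⁻¹ with hsq2
  have hsq2pos : 0 < sq2 := by rw [hsq2]; positivity
  have hsq2sq : sq2 ^ 2 = 1 / 2 := by
    rw [hsq2, inv_pow, Real.sq_sqrt (by norm_num : (0:ℝ) ≤ 2)]
    norm_num
  set a : Fin m → ℝ := fun i => if i ∈ L then 1 else sq2 with ha
  set tt : Fin m → ℝ := fun i => if i ∈ L then 0 else 1 with htt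
  have hapos : ∀ i, 0 < a i := fun i => by
    rw [ha]; dsimp only; split
    · norm_num
    · exact hsq2pos
  set x : Fin m → EuclideanSpace ℝ (Fin (k + 2)) :=
    fun i => (WithLp.toLp 2 fun p => a i * (Fin.snoc (y i) (tt i) : Fin (k + 2) → ℝ) p :
      EuclideanSpace ℝ (Fin (k + 2))) with hx
  have hxcs : ∀ i (j : Fin (k + 1)), x i j.castSucc = a i * y i j := by
    intro i j
    show a i * (Fin.snoc (y i) (tt i) : Fin (k + 2) → ℝ) j.castSucc = a i * y i j
    rw [Fin.snoc_castSucc]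
  have hxlast : ∀ i, x i (Fin.last (k + 1)) = a i * tt i := by
    intro i
    show a i * (Fin.snoc (y i) (tt i) : Fin (k + 2) → ℝ) (Fin.last (k + 1)) = a i * tt i
    rw [Fin.snoc_last]
  have hax : ∀ i, a i * tt i = if i ∈ L then 0 else sq2 := by
    intro i
    rw [ha, htt]; dsimp only; split <;> ring
  refine ⟨x, ?_, ?_, ?_⟩
  · -- injectivity
    intro i j hij
    have hlast := congrFun (congrArg WithLp.ofLp hij) (Fin.last (k + 1))
    rw [hxlast, hxlast, hax, hax] at hlast
    have hmem : (i ∈ L) ↔ (j ∈ L) := by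
      by_contra hcon
      rcases Classical.em (i ∈ L) with hi | hi <;> rcases Classical.em (j ∈ L) with hj | hj
      · exact hcon ⟨fun _ => hj, fun _ => hi⟩
      · rw [if_pos hi, if_neg hj] at hlast; exact absurd hlast.symm (ne_of_gt hsq2pos)
      · rw [if_neg hi, if_pos hj] at hlast; exact absurd hlast (ne_of_gt hsq2pos)
      · exact hcon ⟨fun h => absurd h hi, fun h => absurd h hj⟩
    have haij : a i = a j := by
      rw [ha]; dsimp only
      rcases Classical.em (i ∈ L) with hi | hi
      · rw [if_pos hi, if_pos (hmem.1 hi)]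
      · rw [if_neg hi, if_neg (fun h => hi (hmem.2 h))]
    apply hyinj
    ext p
    have hcp := congrFun (congrArg WithLp.ofLp hij) p.castSucc
    rw [hxcs, hxcs, haij] at hcp
    exact mul_left_cancel₀ (ne_of_gt (hapos j)) hcp
  · -- sphere
    intro i
    rw [mem_sphere_zero_iff_norm, EuclideanSpace.norm_eq]
    have hsum : ∑ j : Fin (k + 2), ‖x i j‖ ^ 2 = 1 := by
      have habs : ∀ j : Fin (k + 2), ‖x i j‖ ^ 2 = x i j ^ 2 := fun j => by
        rw [Real.norm_eq_abs, sq_abs]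
      rw [Finset.sum_congr rfl fun j _ => habs j, Fin.sum_univ_castSucc]
      have hyn : ∑ j : Fin (k + 1), y i j ^ 2 = 1 := by
        have h1 : ‖y i‖ = 1 := mem_sphere_zero_iff_norm.1 (hysph i)
        have h2 : ‖y i‖ ^ 2 = 1 := by rw [h1]; norm_num
        rw [EuclideanSpace.norm_eq,
          Real.sq_sqrt (Finset.sum_nonneg fun j _ => sq_nonneg _)] at h2
        rw [← h2]
        exact Finset.sum_congr rfl fun j _ => by rw [Real.norm_eq_abs, sq_abs]
      have hcssq : ∑ j : Fin (k + 1), x i j.castSucc ^ 2 = a i ^ 2 := by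
        have hterm : ∀ j : Fin (k + 1), x i j.castSucc ^ 2 = a i ^ 2 * y i j ^ 2 := fun j => by
          rw [hxcs]; ring
        rw [Finset.sum_congr rfl fun j _ => hterm j, ← Finset.mul_sum, hyn, mul_one]
      rw [hcssq, hxlast, ha, htt]; dsimp only
      split
      · norm_num
      · rw [mul_one, hsq2sq]; norm_num
    rw [hsum, Real.sqrt_one]
  · -- constraints
    intro l i hiH hmem
    obtain ⟨w, hw1, hws⟩ := (mem_affineSpan_image_iff (H l) x (x i)).1 hmem
    rcases Fin.eq_castSucc_or_eq_last l with ⟨l₀, rfl⟩ | rfl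
    · -- old constraints
      have hcoord : ∀ p : Fin (k + 1),
          ∑ j ∈ H l₀.castSucc, w j * (a j * y j p) = a i * y i p := by
        intro p
        have hcp := congrFun (congrArg WithLp.ofLp hws) p.castSucc
        rw [euclid_sum_apply] at hcp
        rw [hxcs] at hcp
        rw [← hcp]
        refine Finset.sum_congr rfl fun j _ => ?_
        rw [PiLp.smul_apply, smul_eq_mul, hxcs]
      have hlastrow : ∑ j ∈ H l₀.castSucc, w j * (a j * tt j) = a i * tt i := by
        have hcp := congrFun (congrArg WithLp.ofLp hws) (Fin.last (k + 1))
        rw [euclid_sum_apply] at hcp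
        rw [hxlast] at hcp
        rw [← hcp]
        refine Finset.sum_congr rfl fun j _ => ?_
        rw [PiLp.smul_apply, smul_eq_mul, hxlast]
      have hajt : ∀ j, a j * tt j = sq2 * tt j := fun j => by
        rw [ha, htt]; dsimp only; split <;> ring
      have hT : sq2 * ∑ j ∈ H l₀.castSucc, w j * tt j = a i * tt i := by
        rw [← hlastrow, Finset.mul_sum]
        exact Finset.sum_congr rfl fun j _ => by rw [hajt]; ring
      have haj : ∀ j, w j * a j = w j - (1 - sq2) * (w j * tt j) := fun j => by
        rw [ha, htt]; dsimp only; split <;> ring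
      have hS1 : ∑ j ∈ H l₀.castSucc, w j * a j = a i := by
        rw [Finset.sum_congr rfl fun j _ => haj j, Finset.sum_sub_distrib, hw1,
          ← Finset.mul_sum]
        by_cases hi : i ∈ L
        · have h0 : a i * tt i = 0 := by
            rw [htt]; dsimp only; rw [if_pos hi]; ring
          have hT0 : ∑ j ∈ H l₀.castSucc, w j * tt j = 0 := by
            have h' := hT
            rw [h0] at h'
            exact (mul_eq_zero.1 h').resolve_left (ne_of_gt hsq2pos)
          rw [hT0, mul_zero, sub_zero, ha]; dsimp only; rw [if_pos hi]
        · have h1 : a i * tt i = sq2 := by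
            rw [ha, htt]; dsimp only; rw [if_neg hi, if_neg hi]; ring
          have hT1 : ∑ j ∈ H l₀.castSucc, w j * tt j = 1 := by
            have h' := hT
            rw [h1] at h'
            have := mul_left_cancel₀ (ne_of_gt hsq2pos) (h'.trans (mul_one sq2).symm)
            exact this
          rw [hT1, mul_one, ha]; dsimp only; rw [if_neg hi]; ring
      apply hycon l₀ i hiH
      refine (mem_affineSpan_image_iff (H l₀.castSucc) y (y i)).2
        ⟨fun j => w j * a j / a i, ?_, ?_⟩
      · rw [← Finset.sum_div, hS1, div_self (ne_of_gt (hapos i))]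
      · ext p
        rw [euclid_sum_apply]
        have hterm : ∀ j ∈ H l₀.castSucc, ((w j * a j / a i) • y j) p
            = w j * (a j * y j p) / a i := fun j _ => by
          rw [PiLp.smul_apply, smul_eq_mul]; ring
        rw [Finset.sum_congr rfl hterm, ← Finset.sum_div, hcoord p]
        field_simp
        exact mul_div_cancel_left₀ _ (ne_of_gt (hapos i))
    · -- new constraint
      have hlastcoord := congrFun (congrArg WithLp.ofLp hws) (Fin.last (k + 1))
      rw [euclid_sum_apply, hxlast] at hlastcoord
      have hz : ∑ j ∈ H (Fin.last n), w j • x j (Fin.last (k + 1)) = 0 :=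
        Finset.sum_eq_zero fun j hj => by
          rw [smul_eq_mul, hxlast, hax, if_pos (hL ▸ hj)]
          ring
      have hz' : ∑ j ∈ H (Fin.last n), (w j • x j) (Fin.last (k + 1)) = 0 := by
        rw [← hz]
        exact Finset.sum_congr rfl fun j _ => by rw [PiLp.smul_apply, smul_eq_mul]
      rw [hz'] at hlastcoord
      rw [hax, if_neg (fun h => hiH (hL ▸ h))] at hlastcoord
      exact absurd hlastcoord.symm (ne_of_gt hsq2pos)

lemma choose_two_step (j : ℕ) : Nat.choose (j + 3) 2 = Nat.choose (j + 2) 2 + (j + 2) := by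
  have h := Nat.choose_succ_succ (j + 2) 1
  norm_num at h
  rw [show j + 2 + 1 = j + 3 from by omega] at h
  omega

lemma choose_two_lb (j : ℕ) : j + 1 ≤ Nat.choose (j + 2) 2 := by
  induction j with
  | zero => decide
  | succ p ihp =>
    have hs := choose_two_step p
    rw [show p + 1 + 2 = p + 3 from by omega]
    omega

lemma budget_step {k S c : ℕ} (hsum : S + c < Nat.choose (k + 3) 2 - 3)
    (hc : k + 2 ≤ c) :
    ∃ K, k = K + 2 ∧ S < Nat.choose (K + 1 + 3) 2 - 3 := by
  have hk2 : 2 ≤ k := by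
    by_contra h
    push_neg at h
    interval_cases k
    · have h3 : Nat.choose (0 + 3) 2 = 3 := by decide
      omega
    · have h4 : Nat.choose (1 + 3) 2 = 6 := by decide
      omega
  obtain ⟨K, rfl⟩ : ∃ K, k = K + 2 := ⟨k - 2, by omega⟩
  have hstep := choose_two_step (K + 2)
  have hlb := choose_two_lb (K + 2)
  have hEq : Nat.choose (K + 1 + 3) 2 = Nat.choose (K + 2 + 2) 2 := by
    rw [show K + 1 + 3 = K + 2 + 2 from by omega]
  exact ⟨K, rfl, by omega⟩

lemma realizable_of_small_sum (m : ℕ) :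
    ∀ (n k : ℕ) (H : Fin n → Finset (Fin m)),
      (∀ i j : Fin n, i ≤ j → (H i).card ≤ (H j).card) →
      (∑ i : Fin n, (H i).card) < Nat.choose (k + 3) 2 - 3 →
      RealizableOnSphere m n k H := by
  intro n
  induction n with
  | zero =>
    intro k H _ hsum
    have hk : 1 ≤ k := by
      by_contra h
      push_neg at h
      interval_cases k
      have h3 : Nat.choose (0 + 3) 2 = 3 := by decide
      omega
    exact all_small_realizable m 0 k hk H (fun l => l.elim0)
  | succ n ih =>
    intro k H hmono hsum
    have hsplit : ∑ i : Fin (n + 1), (H i).card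
        = ∑ i : Fin n, (H i.castSucc).card + (H (Fin.last n)).card :=
      Fin.sum_univ_castSucc (fun i : Fin (n + 1) => (H i).card)
    by_cases hsmall : (H (Fin.last n)).card ≤ k + 1
    · have hk : 1 ≤ k := by
        by_contra h
        push_neg at h
        interval_cases k
        have h3 : Nat.choose (0 + 3) 2 = 3 := by decide
        omega
      exact all_small_realizable m (n + 1) k hk H
        (fun l => le_trans (hmono l (Fin.last n) (Fin.le_last l)) hsmall)
    · push_neg at hsmall
      rw [hsplit] at hsum
      obtain ⟨K, rfl, hbound⟩ := budget_step hsum hsmall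
      exact lift_step m n (K + 1) H (ih (K + 1) (fun l => H l.castSucc)
        (fun i j hij => hmono _ _ (Fin.castSucc_le_castSucc_iff.2 hij)) hbound)

/-- Lemma 1: if the index sets `H_1,…,H_n ⊆ {1,…,m}` have nondecreasing
sizes and `(B, H)` is not realizable on a `k`-dimensional sphere, then
`Σ |H_i| ≥ C(k+3,2) - 3`. -/
theorem stmt_19 (m n k : ℕ) (H : Fin n → Finset (Fin m))
    (hmono : ∀ i j : Fin n, i ≤ j → (H i).card ≤ (H j).card)
    (hnr : ¬ RealizableOnSphere m n k H) :
    Nat.choose (k + 3) 2 - 3 ≤ ∑ i : Fin n, (H i).card := by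
  by_contra hlt
  push_neg at hlt
  exact hnr (realizable_of_small_sum m n k H hmono hlt)
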